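/- Under the simplifying assumption that all posterior variances are equal, σᵢ² = σ̄² for all i, the minimum over (μ', σ') of Σᵢ D_KL(N(μᵢ, σ̄²) ‖ N(μ', σ'²)) equals ξ = (n/2)·log(1 + (1/(n·σ̄²))·Σᵢ (μᵢ - μ̄)²), where μ̄ = (1/n)Σᵢ μᵢ. -/

import Mathlib

open Real Finset

/-- Closed-form KL divergence between univariate Gaussians N(μ₁,σ₁²) and N(μ₂,σ₂²). -/
noncomputable def klGauss (μ₁ σ₁ μ₂ σ₂ : ℝ) : ℝ :=
  Real.log (σ₂ / σ₁) + (σ₁^2 + (μ₁ - μ₂)^2) / (2 * σ₂^2) - 1/2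

/-- with equal posterior variances σ̄², the minimum over priors (μ',σ')
of the summed KL divergence equals ξ = (n/2)·log(1 + (1/(nσ̄²))Σᵢ(μᵢ-μ̄)²). -/
theorem kl_sum_min_value (n : ℕ) (hn : 1 ≤ n) (μ : Fin n → ℝ) (σbar : ℝ) (hσ : 0 < σbar) :
    let μbar : ℝ := (1 / n) * ∑ i, μ i
    let ξ : ℝ := ((n : ℝ) / 2) * Real.log (1 + (1 / (n * σbar^2)) * ∑ i, (μ i - μbar)^2)
    IsLeast {v : ℝ | ∃ μ' σ' : ℝ, 0 < σ' ∧
      v = ∑ i, klGauss (μ i) σbar μ' σ'} ξ := by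
  intro μbar ξ
  have hn0 : (0:ℝ) < n := by exact_mod_cast Nat.lt_of_lt_of_le Nat.zero_lt_one hn
  set S : ℝ := ∑ i, (μ i - μbar)^2 with hS
  have hS0 : 0 ≤ S := Finset.sum_nonneg fun i _ => sq_nonneg _
  set A : ℝ := σbar^2 + S / n with hAdef
  have hA : 0 < A := by positivity
  -- sum formula
  have key : ∀ μ' σ' : ℝ, 0 < σ' →
      ∑ i, klGauss (μ i) σbar μ' σ' =
        n * (Real.log σ' - Real.log σbar) +
          (n * σbar^2 + ∑ i, (μ i - μ')^2) / (2 * σ'^2) - n/2 := by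
    intro μ' σ' hσ'
    simp only [klGauss]
    rw [Finset.sum_sub_distrib, Finset.sum_add_distrib, ← Finset.sum_div,
      Finset.sum_add_distrib, Finset.sum_const, Finset.sum_const, Finset.sum_const,
      Finset.card_univ, Fintype.card_fin, Real.log_div hσ'.ne' hσ.ne']
    push_cast
    ring
  have hsumμ : ∑ i, μ i = n * μbar := by
    simp only [μbar]; rw [← mul_assoc, mul_one_div_cancel hn0.ne', one_mul]
  have hzero : ∑ i, (μ i - μbar) = 0 := by
    rw [Finset.sum_sub_distrib, Finset.sum_const, Finset.card_univ, Fintype.card_fin,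
      hsumμ, nsmul_eq_mul]
    ring
  have hsq : ∀ μ' : ℝ, ∑ i, (μ i - μ')^2 = S + n * (μbar - μ')^2 := by
    intro μ'
    have h : ∀ i : Fin n, (μ i - μ')^2 =
        (μ i - μbar)^2 + (2*(μbar - μ'))*(μ i - μbar) + (μbar - μ')^2 := by
      intro i; ring
    simp_rw [h]
    rw [Finset.sum_add_distrib, Finset.sum_add_distrib, ← Finset.mul_sum, hzero,
      Finset.sum_const, Finset.card_univ, Fintype.card_fin, nsmul_eq_mul]
    ring
  have hξ : ξ = ((n:ℝ)/2) * (Real.log A - 2 * Real.log σbar) := by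
    have h1 : (1 + (1/(n*σbar^2)) * S) = A / σbar^2 := by
      field_simp [hAdef]
      rw [hAdef]; field_simp
    have h2 : Real.log (A / σbar^2) = Real.log A - 2 * Real.log σbar := by
      rw [Real.log_div hA.ne' (by positivity), Real.log_pow]
      push_cast; ring
    simp only [ξ, ← hS, h1, h2]
  constructor
  · -- membership: μ' = μbar, σ' = sqrt A
    refine ⟨μbar, Real.sqrt A, Real.sqrt_pos.mpr hA, ?_⟩
    rw [key μbar (Real.sqrt A) (Real.sqrt_pos.mpr hA), hsq, hξ]
    have hsqA : Real.sqrt A ^ 2 = A := Real.sq_sqrt hA.le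
    have hlogA : Real.log (Real.sqrt A) = Real.log A / 2 := Real.log_sqrt hA.le
    rw [hsqA, hlogA]
    have : n * σbar^2 + (S + n * (μbar - μbar)^2) = n * A := by
      rw [hAdef]; field_simp; ring
    rw [this]
    field_simp
    ring
  · -- lower bound
    rintro v ⟨μ', σ', hσ', rfl⟩
    rw [key μ' σ' hσ', hsq, hξ]
    have hσ'2 : (0:ℝ) < σ'^2 := by positivity
    have hlog : Real.log A - 2 * Real.log σ' ≤ A / σ'^2 - 1 := by
      have := Real.log_le_sub_one_of_pos (show (0:ℝ) < A / σ'^2 by positivity)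
      rwa [Real.log_div hA.ne' hσ'2.ne', Real.log_pow, Nat.cast_ofNat] at this
    have hd : 0 ≤ n * (μbar - μ')^2 / (2 * σ'^2) := by positivity
    have hnA : n * σbar^2 + S = n * A := by rw [hAdef]; field_simp
    have h1 : ((n:ℝ)/2) * (Real.log A - 2 * Real.log σ') ≤ ((n:ℝ)/2) * (A / σ'^2 - 1) :=
      mul_le_mul_of_nonneg_left hlog (by positivity)
    have h2 : (n * σbar^2 + (S + n * (μbar - μ')^2)) / (2 * σ'^2)
        = n * A / (2 * σ'^2) + n * (μbar - μ')^2 / (2 * σ'^2) := by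
      rw [← hnA]; ring
    rw [h2]
    have h3 : ((n:ℝ)/2) * (A / σ'^2 - 1) = n * A / (2 * σ'^2) - n/2 := by
      field_simp
    nlinarith [h1, hd]
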